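/- Let A be a sequence of n real numbers with interval partition I_0,...,I_{λ-1}, let x ≥ 0 be real, p ∈ {0,...,n-1}, and let I_k be the interval containing p. Assume k < λ-1, and let B = ins(A,p,x). Then the maximum of MS(B, i+1) over all i with β_k < i < n equals max( max over β_k < i < n of MS(A,i), x + sum(I_k) + max over β_k < i < n of sum of A[β_k+1 .. i] ). -/

import Mathlib

noncomputable section

/-- Sum of the contiguous subsequence A[j..i]. -/
def seg (A : ℕ → ℝ) (j i : ℕ) : ℝ := ∑ t ∈ Finset.Icc j i, A t

/-- Maximal sum at element i: max over j ≤ i of sum A[j..i]. -/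
def MS (A : ℕ → ℝ) (i : ℕ) : ℝ :=
  (Finset.range (i+1)).sup' (Finset.nonempty_range_iff.mpr (Nat.succ_ne_zero i))
    (fun j => seg A j i)

/-- Maximal sum of a contiguous, possibly empty, subsequence of A[0..n-1]. -/
def maxsum (A : ℕ → ℝ) (n : ℕ) : ℝ :=
  Finset.fold max 0 (fun q => seg A q.1 q.2)
    (Finset.filter (fun q => q.1 ≤ q.2) ((Finset.range n) ×ˢ (Finset.range n)))

/-- Insertion of x between A[p-1] and A[p]. -/
def ins (A : ℕ → ℝ) (p : ℕ) (x : ℝ) : ℕ → ℝ :=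
  fun i => if i < p then A i else if i = p then x else A (i - 1)

/-- Sum of the circular subsequence A⟨j..i⟩ of a sequence of length n. -/
def circseg (A : ℕ → ℝ) (n j i : ℕ) : ℝ :=
  if j ≤ i then seg A j i else seg A j (n-1) + seg A 0 i

/-- Maximal circular sum at element i. -/
def MCS (A : ℕ → ℝ) (n i : ℕ) : ℝ :=
  if h : 0 < n then
    (Finset.range n).sup' (Finset.nonempty_range_iff.mpr h.ne')
      (fun j => circseg A n j i)
  else 0

/-- Maximal circular sum of a possibly empty circular subsequence. -/
def mcs (A : ℕ → ℝ) (n : ℕ) : ℝ :=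
  Finset.fold max 0 (fun q => circseg A n q.1 q.2)
    ((Finset.range n) ×ˢ (Finset.range n))

/-- OMCS A n i = i ⊖ j*, where j* is the largest j with sum A⟨(i⊖j)..i⟩ = MCS A n i. -/
def OMCS (A : ℕ → ℝ) (n i : ℕ) : ℕ :=
  (i + n - ((Finset.filter
      (fun j => circseg A n ((i + n - j) % n) i = MCS A n i)
      (Finset.range n)).max.getD 0)) % n

/-- h belongs to the circular range from a to b (indices mod n). -/
def inCircRange (n a b h : ℕ) : Prop :=
  (a ≤ b ∧ a ≤ h ∧ h ≤ b) ∨ (b < a ∧ ((a ≤ h ∧ h < n) ∨ h ≤ b))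

/-- The (noncircular) interval partition of A into L intervals A[α i .. β i]. -/
def IntervalPartition (A : ℕ → ℝ) (n L : ℕ) (α β : ℕ → ℕ) : Prop :=
  0 < L ∧ 0 < n ∧ α 0 = 0 ∧ β (L-1) = n-1 ∧
  (∀ i, i + 1 < L → α (i+1) = β i + 1) ∧
  (∀ i, i < L → α i ≤ β i) ∧
  (∀ i, i < L → ∀ j, α i ≤ j → j ≤ β i →
     (j ≠ β i → 0 ≤ MS A j) ∧ (j = β i → i < L - 1 → MS A j < 0))


lemma seg_single (A : ℕ → ℝ) (a : ℕ) : seg A a a = A a := by simp [seg]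

lemma seg_split (A : ℕ → ℝ) {j m i : ℕ} (h1 : j ≤ m) (h2 : m < i) :
    seg A j i = seg A j m + seg A (m+1) i := by
  unfold seg
  rw [show Finset.Icc j i = Finset.Icc j m ∪ Finset.Icc (m+1) i from by
    ext t; simp only [Finset.mem_Icc, Finset.mem_union]; omega]
  rw [Finset.sum_union (by
    rw [Finset.disjoint_left]
    intro t ht ht'
    simp only [Finset.mem_Icc] at ht ht'
    omega)]

lemma sup'_add_const {s : Finset ℕ} (h : s.Nonempty) (f : ℕ → ℝ) (c : ℝ) :
    s.sup' h (fun j => f j + c) = s.sup' h f + c := by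
  apply le_antisymm
  · exact Finset.sup'_le _ _ fun b hb => add_le_add_left (Finset.le_sup' f hb) c
  · have : s.sup' h f ≤ s.sup' h (fun j => f j + c) - c :=
      Finset.sup'_le _ _ fun b hb =>
        le_sub_iff_add_le.mpr (Finset.le_sup' (fun j => f j + c) hb)
    linarith

lemma sup'_const_add {s : Finset ℕ} (h : s.Nonempty) (f : ℕ → ℝ) (c : ℝ) :
    s.sup' h (fun j => c + f j) = c + s.sup' h f := by
  rw [Finset.sup'_congr h rfl (fun j _ => add_comm c (f j)), sup'_add_const h f c]
  ring

lemma sup'_max {s : Finset ℕ} (h : s.Nonempty) (f g : ℕ → ℝ) :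
    s.sup' h (fun j => max (f j) (g j)) = max (s.sup' h f) (s.sup' h g) := by
  apply le_antisymm
  · exact Finset.sup'_le _ _ fun b hb =>
      max_le_max (Finset.le_sup' f hb) (Finset.le_sup' g hb)
  · exact max_le
      (Finset.sup'_le _ _ fun b hb =>
        le_trans (le_max_left _ _) (Finset.le_sup' (fun j => max (f j) (g j)) hb))
      (Finset.sup'_le _ _ fun b hb =>
        le_trans (le_max_right _ _) (Finset.le_sup' (fun j => max (f j) (g j)) hb))

lemma kadane (A : ℕ → ℝ) (i : ℕ) :
    MS A (i+1) = max (A (i+1)) (MS A i + A (i+1)) := by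
  have hne : (Finset.range (i+1)).Nonempty :=
    Finset.nonempty_range_iff.mpr (Nat.succ_ne_zero i)
  have h1 : MS A (i+1) =
      (insert (i+1) (Finset.range (i+1))).sup'
        (hne.mono (Finset.subset_insert _ _)) (fun j => seg A j (i+1)) :=
    Finset.sup'_congr _ Finset.range_add_one (fun _ _ => rfl)
  rw [h1, Finset.sup'_insert, seg_single]
  congr 1
  have h2 : ∀ j ∈ Finset.range (i+1), seg A j (i+1) = seg A j i + A (i+1) :=
    fun j hj => Finset.sum_Icc_succ_top (by simp at hj; omega) A
  rw [Finset.sup'_congr hne rfl h2, sup'_add_const]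
  rfl
  exact hne

lemma ins_seg_high (A : ℕ → ℝ) (p : ℕ) (x : ℝ) {m i : ℕ} (hm : p ≤ m) :
    seg (ins A p x) (m+1) (i+1) = seg A m i := by
  unfold seg
  rw [show Finset.Icc (m+1) (i+1) = Finset.map (addRightEmbedding 1) (Finset.Icc m i) from
    (Finset.map_add_right_Icc m i 1).symm, Finset.sum_map]
  apply Finset.sum_congr rfl
  intro t ht
  simp only [Finset.mem_Icc] at ht
  simp only [addRightEmbedding_apply, ins]
  rw [if_neg (by omega), if_neg (by omega)]
  simp

lemma ins_seg_low (A : ℕ → ℝ) (p : ℕ) (x : ℝ) {j i : ℕ} (hj : j ≤ p) (hpi : p ≤ i) :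
    seg (ins A p x) j (i+1) = x + seg A j i := by
  have e1 : Finset.Icc j (i+1) = Finset.Ico j p ∪ {p} ∪ Finset.Icc (p+1) (i+1) := by
    ext t; simp only [Finset.mem_Icc, Finset.mem_union, Finset.mem_Ico,
      Finset.mem_singleton]; omega
  have e2 : Finset.Icc j i = Finset.Ico j p ∪ Finset.Icc p i := by
    ext t; simp only [Finset.mem_Icc, Finset.mem_union, Finset.mem_Ico]; omega
  have hhigh : seg (ins A p x) (p+1) (i+1) = seg A p i := ins_seg_high A p x le_rfl
  unfold seg at hhigh ⊢
  rw [e1, Finset.sum_union (by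
        rw [Finset.disjoint_left]
        intro t ht ht'
        simp only [Finset.mem_union, Finset.mem_Ico, Finset.mem_singleton,
            Finset.mem_Icc] at ht ht'
        omega),
      Finset.sum_union (by
        rw [Finset.disjoint_left]
        intro t ht ht'
        simp only [Finset.mem_Ico, Finset.mem_singleton] at ht ht'
        omega),
      e2, Finset.sum_union (by
        rw [Finset.disjoint_left]
        intro t ht ht'
        simp only [Finset.mem_Ico, Finset.mem_Icc] at ht ht'
        omega)]
  have hlo : ∑ t ∈ Finset.Ico j p, ins A p x t = ∑ t ∈ Finset.Ico j p, A t := by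
    apply Finset.sum_congr rfl; intro t ht
    simp only [Finset.mem_Ico] at ht
    simp [ins, if_pos ht.2]
  rw [hlo, Finset.sum_singleton, hhigh]
  simp [ins]
  ring

lemma setimg (f : ℕ → ℝ) (a n : ℕ) :
    {v | ∃ i, a < i ∧ i < n ∧ v = f i} = f '' ↑(Finset.Ioo a n) := by
  ext v
  constructor
  · rintro ⟨i, h1, h2, rfl⟩
    exact ⟨i, Finset.mem_coe.mpr (Finset.mem_Ioo.mpr ⟨h1, h2⟩), rfl⟩
  · rintro ⟨i, hi, rfl⟩
    have h := Finset.mem_Ioo.mp (Finset.mem_coe.mp hi)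
    exact ⟨i, h.1, h.2, rfl⟩

lemma max_absorb {a b c : ℝ} (h : b ≤ a) : max a (max b c) = max a c := by
  rw [← max_assoc, max_eq_left h]


theorem stmt6 (A : ℕ → ℝ) (n L : ℕ) (α β : ℕ → ℕ)
    (hip : IntervalPartition A n L α β)
    (x : ℝ) (hx : 0 ≤ x) (p k : ℕ) (hp : p < n)
    (hk : k < L) (hk' : k < L - 1) (hpk : α k ≤ p ∧ p ≤ β k) :
    sSup {v | ∃ i, β k < i ∧ i < n ∧ v = MS (ins A p x) (i+1)} =
      max (sSup {v | ∃ i, β k < i ∧ i < n ∧ v = MS A i})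
          (x + seg A (α k) (β k) +
            sSup {v | ∃ i, β k < i ∧ i < n ∧ v = seg A (β k + 1) i}) := by
  obtain ⟨hL, hn, hα0, hβL, hαs, hαβ, hprop⟩ := hip
  obtain ⟨hαp, hpβ⟩ := hpk
  set B := ins A p x with hB
  -- monotonicity of β
  have hβmono : ∀ i j, i ≤ j → j < L → β i ≤ β j := by
    intro i
    refine Nat.le_induction (fun _ => le_rfl) ?_
    intro j hij IH hjL
    have h1 : α (j+1) = β j + 1 := hαs j hjL
    have h2 := hαβ (j+1) hjL
    have h3 := IH (by omega)
    omega
  have hβkn : β k + 1 < n := by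
    have h1 : α (k+1) = β k + 1 := hαs k (by omega)
    have h2 := hαβ (k+1) (by omega)
    have h3 := hβmono (k+1) (L-1) (by omega) (by omega)
    omega
  -- MS equals the segment from α k inside interval k
  have hMSeq : ∀ j, α k ≤ j → j ≤ β k → MS A j = seg A (α k) j := by
    have key : ∀ j, α k ≤ j → (j ≤ β k → MS A j = seg A (α k) j) := by
      refine Nat.le_induction ?_ ?_
      · intro _
        rcases Nat.eq_zero_or_pos k with hk0 | hkpos
        · have h0 : α k = 0 := by rw [hk0]; exact hα0
          rw [h0, seg_single]
          have e0 : MS A 0 = ({0} : Finset ℕ).sup'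
              ⟨0, Finset.mem_singleton_self 0⟩ (fun j => seg A j 0) :=
            Finset.sup'_congr _ Finset.range_one (fun _ _ => rfl)
          rw [e0, Finset.sup'_singleton, seg_single]
        · obtain ⟨m, rfl⟩ : ∃ m, k = m+1 := ⟨k-1, by omega⟩
          have hα : α (m+1) = β m + 1 := hαs m (by omega)
          have hneg : MS A (β m) < 0 :=
            (hprop m (by omega) (β m) (hαβ m (by omega)) le_rfl).2 rfl (by omega)
          rw [hα, kadane, seg_single]
          exact max_eq_left (by linarith)
      · intro j hj IH hj1
        have hIH := IH (by omega)
        have hpos : 0 ≤ MS A j := (hprop k hk j hj (by omega)).1 (by omega)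
        rw [kadane, hIH,
          show seg A (α k) (j+1) = seg A (α k) j + A (j+1) from
            Finset.sum_Icc_succ_top (by omega) A]
        exact max_eq_right (by linarith)
    exact fun j h1 h2 => key j h1 h2
  have hCmax : ∀ j, j ≤ β k → seg A j (β k) ≤ seg A (α k) (β k) := by
    intro j hj
    have h1 : MS A (β k) = seg A (α k) (β k) := hMSeq (β k) (hαβ k hk) le_rfl
    have h2 : seg A j (β k) ≤ MS A (β k) :=
      Finset.le_sup' (fun j => seg A j (β k)) (Finset.mem_range.mpr (by omega))
    linarith
  set C := seg A (α k) (β k) with hCdef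
  -- pointwise computation
  have hpoint : ∀ i, β k < i → i < n →
      MS B (i+1) = max (x + C + seg A (β k + 1) i) (MS A i) := by
    intro i hi1 hi2
    have hpi : p < i := by omega
    have hne1 : (Finset.range (p+1)).Nonempty :=
      Finset.nonempty_range_iff.mpr (Nat.succ_ne_zero p)
    have hne2 : (Finset.Icc (p+1) i).Nonempty := Finset.nonempty_Icc.mpr (by omega)
    have hne3 : (Finset.Icc (p+1) (i+1)).Nonempty := Finset.nonempty_Icc.mpr (by omega)
    have hnepi : (Finset.Icc p i).Nonempty := Finset.nonempty_Icc.mpr (by omega)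
    have hlowA : (Finset.range (p+1)).sup' hne1 (fun j => seg A j i)
        = C + seg A (β k + 1) i := by
      apply le_antisymm
      · apply Finset.sup'_le
        intro j hj
        rw [Finset.mem_range] at hj
        rw [seg_split A (show j ≤ β k by omega) hi1]
        exact add_le_add_left (hCmax j (by omega)) _
      · have hsplit : seg A (α k) i = C + seg A (β k + 1) i :=
          seg_split A (hαβ k hk) hi1
        rw [← hsplit]
        exact Finset.le_sup' (fun j => seg A j i) (Finset.mem_range.mpr (by omega))
    -- MS A i decomposition
    have hrange : Finset.range (i+1) = Finset.range (p+1) ∪ Finset.Icc (p+1) i := by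
      ext t; simp only [Finset.mem_range, Finset.mem_union, Finset.mem_Icc]; omega
    have hMSA : MS A i = max (C + seg A (β k + 1) i)
        ((Finset.Icc (p+1) i).sup' hne2 (fun j => seg A j i)) := by
      have e1 : MS A i = (Finset.range (p+1) ∪ Finset.Icc (p+1) i).sup'
          (hne1.mono Finset.subset_union_left) (fun j => seg A j i) :=
        Finset.sup'_congr _ hrange (fun _ _ => rfl)
      rw [e1, Finset.sup'_union hne1 hne2, hlowA]
    -- MS B (i+1) decomposition
    have hrange2 : Finset.range (i+2) = Finset.range (p+1) ∪ Finset.Icc (p+1) (i+1) := by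
      ext t; simp only [Finset.mem_range, Finset.mem_union, Finset.mem_Icc]; omega
    have e2 : MS B (i+1) = (Finset.range (p+1) ∪ Finset.Icc (p+1) (i+1)).sup'
        (hne1.mono Finset.subset_union_left) (fun j => seg B j (i+1)) :=
      Finset.sup'_congr _ hrange2 (fun _ _ => rfl)
    have hlowB : (Finset.range (p+1)).sup' hne1 (fun j => seg B j (i+1))
        = x + C + seg A (β k + 1) i := by
      rw [Finset.sup'_congr hne1 rfl (fun j hj =>
        ins_seg_low A p x (show j ≤ p by simpa using Nat.lt_succ_iff.mp (Finset.mem_range.mp hj)) (by omega))]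
      rw [sup'_const_add hne1 (fun j => seg A j i) x, hlowA]
      ring
    have hhighB : (Finset.Icc (p+1) (i+1)).sup' hne3 (fun j => seg B j (i+1))
        = (Finset.Icc p i).sup' hnepi (fun j => seg A j i) := by
      have em : Finset.Icc (p+1) (i+1) = Finset.map (addRightEmbedding 1) (Finset.Icc p i) :=
        (Finset.map_add_right_Icc p i 1).symm
      have e3 : (Finset.Icc (p+1) (i+1)).sup' hne3 (fun j => seg B j (i+1))
          = (Finset.map (addRightEmbedding 1) (Finset.Icc p i)).sup'
            (by rw [← em]; exact hne3) (fun j => seg B j (i+1)) :=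
        Finset.sup'_congr _ em (fun _ _ => rfl)
      rw [e3, Finset.sup'_map]
      apply Finset.sup'_congr hnepi rfl
      intro t ht
      simp only [Finset.mem_Icc] at ht
      exact ins_seg_high A p x ht.1
    have hIccpi : Finset.Icc p i = insert p (Finset.Icc (p+1) i) := by
      ext t; simp only [Finset.mem_Icc, Finset.mem_insert]; omega
    have hpisup : (Finset.Icc p i).sup' hnepi (fun j => seg A j i)
        = max (seg A p i) ((Finset.Icc (p+1) i).sup' hne2 (fun j => seg A j i)) := by
      have e4 : (Finset.Icc p i).sup' hnepi (fun j => seg A j i)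
          = (insert p (Finset.Icc (p+1) i)).sup'
            (hne2.mono (Finset.subset_insert _ _)) (fun j => seg A j i) :=
        Finset.sup'_congr _ hIccpi (fun _ _ => rfl)
      rw [e4, Finset.sup'_insert]
    have hsegpi : seg A p i ≤ C + seg A (β k + 1) i := by
      rw [seg_split A (show p ≤ β k from hpβ) hi1]
      exact add_le_add_left (hCmax p hpβ) _
    rw [e2, Finset.sup'_union hne1 hne3, hlowB, hhighB, hpisup, hMSA]
    rw [max_absorb (by linarith), max_absorb (by linarith)]
  -- assemble
  have hT : (Finset.Ioo (β k) n).Nonempty :=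
    ⟨β k + 1, Finset.mem_Ioo.mpr ⟨by omega, by omega⟩⟩
  have eB := Finset.sup'_eq_csSup_image (Finset.Ioo (β k) n) hT (fun i => MS B (i+1))
  have eA := Finset.sup'_eq_csSup_image (Finset.Ioo (β k) n) hT (fun i => MS A i)
  have eS := Finset.sup'_eq_csSup_image (Finset.Ioo (β k) n) hT (fun i => seg A (β k + 1) i)
  rw [setimg (fun i => MS B (i+1)) (β k) n, ← eB,
      setimg (fun i => MS A i) (β k) n, ← eA,
      setimg (fun i => seg A (β k + 1) i) (β k) n, ← eS]
  have hcongr : (Finset.Ioo (β k) n).sup' hT (fun i => MS B (i+1))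
      = (Finset.Ioo (β k) n).sup' hT
        (fun i => max (x + C + seg A (β k + 1) i) (MS A i)) := by
    apply Finset.sup'_congr hT rfl
    intro i hi
    rw [Finset.mem_Ioo] at hi
    exact hpoint i hi.1 hi.2
  rw [hcongr, sup'_max hT, sup'_const_add hT (fun i => seg A (β k + 1) i) (x + C),
      max_comm]
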